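/- For the Bethe ansatz two-particle solution u(x_1,x_2) = A_{12} ξ_1^{x_1} ξ_2^{x_2} + A_{21} ξ_1^{x_2} ξ_2^{x_1} (ξ_1, ξ_2 nonzero), the boundary condition u(x,x) = μ·u(x-1,x) + λ·u(x,x+1) holds for all x ∈ ℤ if and only if A_{21}/A_{12} = -(ξ_2/ξ_1)·(μ + λξ_1ξ_2 - ξ_1)/(μ + λξ_1ξ_2 - ξ_2), provided A_{12} ≠ 0 and the denominator μ + λξ_1ξ_2 - ξ_2 ≠ 0. -/

import Mathlib

/-- For the Bethe ansatz two-particle solution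
u(x₁,x₂) = A₁₂ ξ₁^{x₁} ξ₂^{x₂} + A₂₁ ξ₁^{x₂} ξ₂^{x₁}, the two-sided PushASEP boundary
condition u(x,x) = μ u(x-1,x) + λ u(x,x+1) holds for all x ∈ ℤ iff
A₂₁/A₁₂ = -(ξ₂/ξ₁)·(μ + λξ₁ξ₂ - ξ₁)/(μ + λξ₁ξ₂ - ξ₂). -/
theorem pushASEP_smatrix {K : Type*} [Field K] (lam mu A12 A21 ξ1 ξ2 : K)
    (hA : A12 ≠ 0) (h1 : ξ1 ≠ 0) (h2 : ξ2 ≠ 0)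
    (hden : mu + lam * ξ1 * ξ2 - ξ2 ≠ 0)
    (u : ℤ → ℤ → K)
    (hu : ∀ x1 x2 : ℤ, u x1 x2 = A12 * ξ1 ^ x1 * ξ2 ^ x2 + A21 * ξ1 ^ x2 * ξ2 ^ x1) :
    (∀ x : ℤ, u x x = mu * u (x - 1) x + lam * u x (x + 1)) ↔
    A21 / A12 = -(ξ2 / ξ1) * ((mu + lam * ξ1 * ξ2 - ξ1) / (mu + lam * ξ1 * ξ2 - ξ2)) := by
  have key : (A21 / A12 = -(ξ2 / ξ1) * ((mu + lam * ξ1 * ξ2 - ξ1) / (mu + lam * ξ1 * ξ2 - ξ2)))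
      ↔ A12 * ξ2 * (mu + lam * ξ1 * ξ2 - ξ1) + A21 * ξ1 * (mu + lam * ξ1 * ξ2 - ξ2) = 0 := by
    rw [div_eq_iff hA]
    constructor
    · intro h
      field_simp at h
      have hd : mu + ξ2 * ξ1 * lam - ξ2 ≠ 0 := by convert hden using 1; ring
      have e := congrArg (· * (mu + ξ2 * ξ1 * lam - ξ2)) h
      simp only [neg_mul, div_mul_cancel₀ _ hd] at e
      linear_combination e
    · intro h
      have e : A21 * (ξ1 * (mu + lam * ξ1 * ξ2 - ξ2)) = -(ξ2 * (mu + lam * ξ1 * ξ2 - ξ1)) * A12 := by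
        linear_combination h
      calc A21 = A21 * (ξ1 * (mu + lam * ξ1 * ξ2 - ξ2)) / (ξ1 * (mu + lam * ξ1 * ξ2 - ξ2)) :=
            (mul_div_cancel_right₀ _ (mul_ne_zero h1 hden)).symm
        _ = _ := by rw [e, div_eq_mul_inv, mul_inv]; ring
  rw [key]
  constructor
  · intro hb
    have h0 := hb 0
    rw [hu, hu, hu] at h0
    simp only [zpow_zero, zpow_one, zero_sub, zero_add] at h0
    rw [zpow_neg_one] at h0
    field_simp at h0
    linear_combination -h0
  · intro h x
    rw [hu, hu, hu, zpow_sub_one₀ h1, zpow_add_one₀ h2, zpow_add_one₀ h1, zpow_sub_one₀ h2]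
    field_simp
    linear_combination -h
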